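/- Let v : [0,1] → ℝ be continuous and suppose that at some x' ∈ (0,1), the one-sided derivatives exist with v'₋(x') < v'₊(x') (a convex kink). Then for every p ∈ (v'₋(x'), v'₊(x')) and every M ∈ ℝ, the pair (p, M) belongs to the second-order subjet of v at x', i.e., there is a C² function φ with φ'(x') = p, φ''(x') = M, and x' a local minimum of v − φ. Consequently, if v is a viscosity supersolution of r·(v(x) − x) − b(x)·M − (1/(2rc))·(M₊)² ≥ 0 with b(x') ≥ 0, taking M large enough yields a contradiction; hence a viscosity supersolution of this equation has no convex kinks in (0,1). -/

import Mathlib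

open Set Filter

set_option maxHeartbeats 1000000 in
/-- A convex kink puts (p, M) in the second-order subjet for every
p between the one-sided derivatives and every M; hence a viscosity
supersolution of the HJB has no convex kinks. -/
theorem stmt14 (v b : ℝ → ℝ) (r c x' l u : ℝ)
    (hr : 0 < r) (hc : 0 < c) (hx' : x' ∈ Ioo (0:ℝ) 1)
    (hcont : ContinuousOn v (Icc 0 1))
    (hbnn : ∀ x ∈ Icc (0:ℝ) 1, 0 ≤ b x)
    (hl : HasDerivWithinAt v l (Iio x') x')
    (hu : HasDerivWithinAt v u (Ioi x') x')
    (hlu : l < u) :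
    (∀ p ∈ Ioo l u, ∀ M : ℝ, ∃ φ : ℝ → ℝ, ContDiff ℝ 2 φ ∧
      deriv φ x' = p ∧ deriv (deriv φ) x' = M ∧
      IsLocalMin (fun x => v x - φ x) x') ∧
    ((∀ x₀ ∈ Ioo (0:ℝ) 1, ∀ p M : ℝ,
        (∃ φ : ℝ → ℝ, ContDiff ℝ 2 φ ∧ deriv φ x₀ = p ∧
          deriv (deriv φ) x₀ = M ∧ IsLocalMin (fun x => v x - φ x) x₀) →
        0 ≤ r * (v x₀ - x₀) - b x₀ * M - (1/(2*r*c)) * (max M 0)^2) →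
      False) := by
  have key : ∀ p ∈ Ioo l u, ∀ M : ℝ, ∃ φ : ℝ → ℝ, ContDiff ℝ 2 φ ∧
      deriv φ x' = p ∧ deriv (deriv φ) x' = M ∧
      IsLocalMin (fun x => v x - φ x) x' := by
    intro p hp M
    set φ : ℝ → ℝ := fun x => v x' + p*(x - x') + (M/2)*(x-x')^2 with hφdef
    have hd : ∀ x, HasDerivAt φ (p + M*(x - x')) x := by
      intro x
      have h1 : HasDerivAt (fun x => p*(x-x')) p x := by
        simpa using ((hasDerivAt_id x).sub_const x').const_mul p
      have h2 : HasDerivAt (fun x => (M/2)*(x-x')^2) (M*(x-x')) x := by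
        have := (((hasDerivAt_id x).sub_const x').pow 2).const_mul (M/2)
        refine this.congr_deriv ?_
        simp only [id]
        ring
      exact (h1.const_add (v x')).add h2
    have hderiv : deriv φ = fun x => p + M*(x - x') := funext fun x => (hd x).deriv
    refine ⟨φ, ?_, ?_, ?_, ?_⟩
    · unfold φ; fun_prop
    · rw [hderiv]; simp
    · rw [hderiv]
      have : HasDerivAt (fun x : ℝ => p + M*(x - x')) M x' := by
        simpa using (((hasDerivAt_id x').sub_const x').const_mul M).const_add p
      simpa using this.deriv
    · -- local min
      have hol := Asymptotics.IsLittleO.def (hasDerivWithinAt_iff_isLittleO.mp hl) (show (0:ℝ) < (p-l)/2 by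
        have := hp.1; linarith)
      have hor := Asymptotics.IsLittleO.def (hasDerivWithinAt_iff_isLittleO.mp hu) (show (0:ℝ) < (u-p)/2 by
        have := hp.2; linarith)
      obtain ⟨δ₁, hδ₁, H₁⟩ := Metric.mem_nhdsWithin_iff.mp hol
      obtain ⟨δ₂, hδ₂, H₂⟩ := Metric.mem_nhdsWithin_iff.mp hor
      have hpl : 0 < p - l := by have := hp.1; linarith
      have hup : 0 < u - p := by have := hp.2; linarith
      set δ₃ := (p-l)/(2*(|M|+1)) with hδ₃def
      set δ₄ := (u-p)/(2*(|M|+1)) with hδ₄def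
      have hMpos : (0:ℝ) < |M| + 1 := by positivity
      have hδ₃ : 0 < δ₃ := by positivity
      have hδ₄ : 0 < δ₄ := by positivity
      set δ := min (min δ₁ δ₂) (min δ₃ δ₄) with hδdef
      have hδ : 0 < δ := by positivity
      rw [IsLocalMin, IsMinFilter, Metric.eventually_nhds_iff]
      refine ⟨δ, hδ, fun x hx => ?_⟩
      simp only [hφdef]
      rcases lt_trichotomy x x' with hlt | heq | hgt
      · have hx1 : dist x x' < δ₁ := lt_of_lt_of_le hx (le_trans (min_le_left _ _) (min_le_left _ _))
        have hx3 : dist x x' < δ₃ := lt_of_lt_of_le hx (le_trans (min_le_right _ _) (min_le_left _ _))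
        have h1 := H₁ ⟨Metric.mem_ball.mpr hx1, hlt⟩
        simp only [mem_setOf_eq, Real.norm_eq_abs, smul_eq_mul] at h1
        have habs : |x - x'| = x' - x := by rw [abs_of_neg (by linarith)]; ring
        rw [habs] at h1
        have h1' := (abs_le.mp h1).1
        rw [Real.dist_eq, habs] at hx3
        have hM : M ≤ |M| := le_abs_self M
        have ht : 0 < x' - x := by linarith
        rw [hδ₃def] at hx3
        have keyq : (M/2)*(x-x')^2 ≤ (p-l)/2 * (x' - x) := by
          have h5 : (x'-x)*(2*(|M|+1)) < (p-l) :=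
            (lt_div_iff₀ (by positivity : (0:ℝ) < 2*(|M|+1))).mp hx3
          nlinarith [sq_nonneg (x - x'), mul_pos ht ht, abs_nonneg M,
            mul_le_mul_of_nonneg_left hM (le_of_lt ht)]
        nlinarith
      · simp [heq]
      · have hx2 : dist x x' < δ₂ := lt_of_lt_of_le hx (le_trans (min_le_left _ _) (min_le_right _ _))
        have hx4 : dist x x' < δ₄ := lt_of_lt_of_le hx (le_trans (min_le_right _ _) (min_le_right _ _))
        have h2 := H₂ ⟨Metric.mem_ball.mpr hx2, hgt⟩
        simp only [mem_setOf_eq, Real.norm_eq_abs, smul_eq_mul] at h2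
        have habs : |x - x'| = x - x' := abs_of_pos (by linarith)
        rw [habs] at h2
        have h2' := (abs_le.mp h2).1
        rw [Real.dist_eq, habs] at hx4
        have hM : M ≤ |M| := le_abs_self M
        have ht : 0 < x - x' := by linarith
        rw [hδ₄def] at hx4
        have keyq : (M/2)*(x-x')^2 ≤ (u-p)/2 * (x - x') := by
          have h5 : (x-x')*(2*(|M|+1)) < (u-p) :=
            (lt_div_iff₀ (by positivity : (0:ℝ) < 2*(|M|+1))).mp hx4
          nlinarith [abs_nonneg M, mul_le_mul_of_nonneg_left hM (le_of_lt ht)]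
        nlinarith

  refine ⟨key, fun H => ?_⟩
  set A := r * (v x' - x') with hA
  set M0 := Real.sqrt (2*r*c*|A|) + 1 with hM0
  have hs : 0 ≤ Real.sqrt (2*r*c*|A|) := Real.sqrt_nonneg _
  have hM0pos : 0 < M0 := by positivity
  have hsq : Real.sqrt (2*r*c*|A|) ^ 2 = 2*r*c*|A| := Real.sq_sqrt (by positivity)
  have hb : 0 ≤ b x' := hbnn x' ⟨le_of_lt hx'.1, le_of_lt hx'.2⟩
  have hHJB := H x' hx' ((l+u)/2) M0
    (key ((l+u)/2) ⟨by linarith, by linarith⟩ M0)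
  rw [max_eq_left (le_of_lt hM0pos)] at hHJB
  have hAabs : A ≤ |A| := le_abs_self A
  have hrc : 0 < 2*r*c := by positivity
  have hk : (1/(2*r*c)) * M0^2 ≥ |A| + 1/(2*r*c) := by
    have : M0^2 ≥ 2*r*c*|A| + 1 := by
      rw [hM0]; nlinarith
    rw [ge_iff_le, ← sub_nonneg]
    have h0 : (1/(2*r*c)) * M0^2 - (|A| + 1/(2*r*c))
        = (1/(2*r*c)) * (M0^2 - (2*r*c*|A| + 1)) := by
      field_simp
    rw [h0]
    have := sub_nonneg.mpr this
    positivity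
  have hkpos : 0 < 1/(2*r*c) := by positivity
  nlinarith [mul_nonneg hb (le_of_lt hM0pos)]
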